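/- Let W be a real d×d matrix and R : [0,1] → Mat(d,ℝ) continuous and symmetric-valued. Suppose F, F̃ : (t₀, 1) → Mat(d,ℝ) are symmetric solutions of the Riccati equation F' = -R̄ - R̃ - F² - FW - WᵀF and F̃' = -R̃ - F̃² - F̃W - WᵀF̃ respectively, where R̄(t) ≥ 0 (positive semidefinite), and F(t) ≥ F̃(t) for all t close enough to 1. Then F(t) ≥ F̃(t) for all t in (t₀, 1). -/

import Mathlib

open Matrix Set Topology Filter

private lemma qform_eq {d : ℕ} (A : Matrix (Fin d) (Fin d) ℝ) (v : Fin d → ℝ) :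
    v ⬝ᵥ A *ᵥ v = ∑ i, ∑ j, v i * A i j * v j := by
  simp only [dotProduct, mulVec, Finset.mul_sum]
  exact Finset.sum_congr rfl fun i _ => Finset.sum_congr rfl fun j _ => by ring

private lemma isHermitian_of_isSymm {d : ℕ} {A : Matrix (Fin d) (Fin d) ℝ} (hA : A.IsSymm) :
    A.IsHermitian := by
  ext i j
  simp only [conjTranspose_apply, star_trivial]
  exact (congrFun (congrFun hA j) i).symm ▸ rfl

set_option maxHeartbeats 2000000 in
theorem riccati_comparison (d : ℕ) (t₀ : ℝ) (ht₀ : t₀ < 1)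
    (W : Matrix (Fin d) (Fin d) ℝ)
    (Rbar Rtil F Ftil : ℝ → Matrix (Fin d) (Fin d) ℝ)
    (hRbarCont : ContinuousOn Rbar (Set.Ioo t₀ 1))
    (hRtilCont : ContinuousOn Rtil (Set.Ioo t₀ 1))
    (hRbarSym : ∀ t ∈ Set.Ioo t₀ 1, (Rbar t).IsSymm)
    (hRtilSym : ∀ t ∈ Set.Ioo t₀ 1, (Rtil t).IsSymm)
    (hFSym : ∀ t ∈ Set.Ioo t₀ 1, (F t).IsSymm)
    (hFtilSym : ∀ t ∈ Set.Ioo t₀ 1, (Ftil t).IsSymm)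
    (hRbarPos : ∀ t ∈ Set.Ioo t₀ 1, (Rbar t).PosSemidef)
    (hF : ∀ t ∈ Set.Ioo t₀ 1, ∀ i j, HasDerivAt (fun s => F s i j)
      ((-(Rbar t) - Rtil t - F t * F t - F t * W - Wᵀ * F t) i j) t)
    (hFtil : ∀ t ∈ Set.Ioo t₀ 1, ∀ i j, HasDerivAt (fun s => Ftil s i j)
      ((-(Rtil t) - Ftil t * Ftil t - Ftil t * W - Wᵀ * Ftil t) i j) t)
    (hnear : ∃ ε > 0, ∀ t ∈ Set.Ioo (1 - ε) 1, t ∈ Set.Ioo t₀ 1 →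
      (F t - Ftil t).PosSemidef) :
    ∀ t ∈ Set.Ioo t₀ 1, (F t - Ftil t).PosSemidef := by
  intro t1 ht1
  obtain ⟨ε, hε, hnear'⟩ := hnear
  by_cases hcase : 1 - ε < t1
  · exact hnear' t1 ⟨hcase, ht1.2⟩ ht1
  push_neg at hcase
  set u : ℝ → Matrix (Fin d) (Fin d) ℝ := fun t => F t - Ftil t with hu_def
  set s₀ : ℝ := 1 - ε / 2 with hs₀_def
  have ht1s₀ : t1 < s₀ := by
    have := ht1.2; simp only [hs₀_def]; linarith
  have hs₀1 : s₀ < 1 := by simp only [hs₀_def]; linarith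
  have hIccIoo : Icc t1 s₀ ⊆ Ioo t₀ 1 := fun t ht =>
    ⟨lt_of_lt_of_le ht1.1 ht.1, lt_of_le_of_lt ht.2 hs₀1⟩
  have hs₀PSD : (u s₀).PosSemidef :=
    hnear' s₀ ⟨by simp only [hs₀_def]; linarith, hs₀1⟩ (hIccIoo ⟨le_of_lt ht1s₀, le_rfl⟩)
  have husym : ∀ t ∈ Ioo t₀ 1, (u t)ᵀ = u t := fun t ht =>
    Matrix.IsSymm.sub (hFSym t ht) (hFtilSym t ht)
  -- derivative of u entries
  have hu' : ∀ t ∈ Ioo t₀ 1, ∀ i j, HasDerivAt (fun s => u s i j)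
      ((-(Rbar t) - (F t * F t - Ftil t * Ftil t) - u t * W - Wᵀ * u t) i j) t := by
    intro t ht i j
    have h := (hF t ht i j).sub (hFtil t ht i j)
    have hmat : (-(Rbar t) - Rtil t - F t * F t - F t * W - Wᵀ * F t)
        - (-(Rtil t) - Ftil t * Ftil t - Ftil t * W - Wᵀ * Ftil t)
        = -(Rbar t) - (F t * F t - Ftil t * Ftil t) - u t * W - Wᵀ * u t := by
      simp only [hu_def]; noncomm_ring
    rw [← hmat, Matrix.sub_apply]
    exact h
  have hucont : ∀ t ∈ Ioo t₀ 1, ∀ i j, ContinuousAt (fun s => u s i j) t :=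
    fun t ht i j => (hu' t ht i j).continuousAt
  -- bound for the middle matrix
  set Bm : ℝ → Matrix (Fin d) (Fin d) ℝ := fun t => F t + Ftil t + W + Wᵀ with hBm_def
  have hFcont : ∀ t ∈ Ioo t₀ 1, ∀ i j, ContinuousAt (fun s => F s i j) t :=
    fun t ht i j => (hF t ht i j).continuousAt
  have hFtilcont : ∀ t ∈ Ioo t₀ 1, ∀ i j, ContinuousAt (fun s => Ftil s i j) t :=
    fun t ht i j => (hFtil t ht i j).continuousAt
  have hbcont : ContinuousOn (fun t => ∑ i, ∑ j, |Bm t i j|) (Icc t1 s₀) := by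
    intro t ht
    apply ContinuousAt.continuousWithinAt
    apply tendsto_finset_sum
    intro i _
    apply tendsto_finset_sum
    intro j _
    exact (((hFcont t (hIccIoo ht) i j).add (hFtilcont t (hIccIoo ht) i j)).add
      continuousAt_const).add continuousAt_const |>.abs
  obtain ⟨tM, htM, hMb⟩ := isCompact_Icc.exists_isMaxOn (α := ℝ)
    (nonempty_Icc.mpr (le_of_lt ht1s₀)) hbcont
  set Mb : ℝ := ∑ i, ∑ j, |Bm tM i j| with hMb_def
  have hMb' : ∀ t ∈ Icc t1 s₀, (∑ i, ∑ j, |Bm t i j|) ≤ Mb := fun t ht => hMb ht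
  set K : ℝ := Mb + 1 with hK_def
  -- the key positivity claim
  have key : ∀ η > (0:ℝ), ∀ t ∈ Icc t1 s₀, ∀ v : Fin d → ℝ, v ⬝ᵥ v = 1 →
      0 < v ⬝ᵥ (u t) *ᵥ v + η * Real.exp (K * (s₀ - t)) := by
    intro η hη
    by_contra hcon
    push_neg at hcon
    obtain ⟨tb, htb, vb, hvb, hGb⟩ := hcon
    set cl : ℝ → ℝ := fun t => max t1 (min t s₀) with hcl_def
    have hclcont : Continuous cl := continuous_const.max (continuous_id.min continuous_const)
    have hclmem : ∀ t, cl t ∈ Icc t1 s₀ := fun t =>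
      ⟨le_max_left _ _, max_le (le_of_lt ht1s₀) (min_le_right _ _)⟩
    have hcleq : ∀ t ∈ Icc t1 s₀, cl t = t := by
      intro t ht
      simp only [hcl_def]
      rw [min_eq_left ht.2, max_eq_right ht.1]
    set G : ℝ × (Fin d → ℝ) → ℝ :=
      fun p => p.2 ⬝ᵥ (u (cl p.1)) *ᵥ p.2 + η * Real.exp (K * (s₀ - p.1)) with hG_def
    have hGcont : Continuous G := by
      apply Continuous.add
      · have he : (fun p : ℝ × (Fin d → ℝ) => p.2 ⬝ᵥ (u (cl p.1)) *ᵥ p.2)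
            = fun p => ∑ i, ∑ j, p.2 i * u (cl p.1) i j * p.2 j := funext fun p => qform_eq _ _
        rw [he]
        apply continuous_finset_sum
        intro i _
        apply continuous_finset_sum
        intro j _
        have hue : Continuous (fun t : ℝ => u (cl t) i j) := by
          rw [continuous_iff_continuousAt]
          intro t
          exact (hucont (cl t) (hIccIoo (hclmem t)) i j).comp hclcont.continuousAt
        exact (((continuous_apply i).comp continuous_snd).mul
          (hue.comp continuous_fst)).mul ((continuous_apply j).comp continuous_snd)
      · exact continuous_const.mul
          (Real.continuous_exp.comp (continuous_const.mul (continuous_const.sub continuous_fst)))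
    set Sph : Set (Fin d → ℝ) := {v | v ⬝ᵥ v = 1} with hSph_def
    have hSphcont : Continuous (fun v : Fin d → ℝ => v ⬝ᵥ v) := by
      simp only [dotProduct]
      apply continuous_finset_sum
      intro i _
      exact (continuous_apply i).mul (continuous_apply i)
    have hSphclosed : IsClosed Sph := isClosed_eq hSphcont continuous_const
    have hSphcompact : IsCompact Sph := by
      apply (isCompact_closedBall (0 : Fin d → ℝ) 1).of_isClosed_subset hSphclosed
      intro v hv
      rw [Metric.mem_closedBall, dist_zero_right]
      rw [pi_norm_le_iff_of_nonneg zero_le_one]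
      intro i
      rw [Real.norm_eq_abs, abs_le_one_iff_mul_self_le_one]
      calc v i * v i ≤ ∑ j, v j * v j :=
            Finset.single_le_sum (fun j _ => mul_self_nonneg (v j)) (Finset.mem_univ i)
        _ = 1 := hv
    set Kset : Set (ℝ × (Fin d → ℝ)) := (Icc t1 s₀ ×ˢ Sph) ∩ {p | G p ≤ 0} with hKset_def
    have hKsetcompact : IsCompact Kset :=
      (isCompact_Icc.prod hSphcompact).inter_right (isClosed_le hGcont continuous_const)
    set Z : Set ℝ := Prod.fst '' Kset with hZ_def
    have hZcompact : IsCompact Z := hKsetcompact.image continuous_fst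
    have hZne : Z.Nonempty := by
      refine ⟨tb, ⟨(tb, vb), ⟨Set.mk_mem_prod htb hvb, ?_⟩, rfl⟩⟩
      show G (tb, vb) ≤ 0
      simp only [hG_def, hcleq tb htb]
      exact hGb
    have htsZ := hZcompact.sSup_mem hZne
    set ts : ℝ := sSup Z with hts_def
    have hZsub : Z ⊆ Icc t1 s₀ := by
      rintro z ⟨p, hp, rfl⟩
      exact hp.1.1
    have htsIcc : ts ∈ Icc t1 s₀ := hZsub htsZ
    have htsIoo : ts ∈ Ioo t₀ 1 := hIccIoo htsIcc
    have hGs₀ : ∀ v ∈ Sph, 0 < G (s₀, v) := by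
      intro v hv
      have h1 : (0:ℝ) ≤ v ⬝ᵥ (u s₀) *ᵥ v := by
        have := hs₀PSD.dotProduct_mulVec_nonneg v
        rwa [star_trivial] at this
      have h2 : G (s₀, v) = v ⬝ᵥ (u s₀) *ᵥ v + η * Real.exp (K * (s₀ - s₀)) := by
        simp only [hG_def, hcleq s₀ ⟨le_of_lt ht1s₀, le_rfl⟩]
      rw [h2]
      have := Real.exp_pos (K * (s₀ - s₀))
      nlinarith
    have hts_lt : ts < s₀ := by
      rcases lt_or_eq_of_le htsIcc.2 with h | h
      · exact h
      · exfalso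
        obtain ⟨⟨tz, vz⟩, hpz, hfst⟩ := htsZ
        have htz' : tz = s₀ := by rw [← h]; exact hfst
        have := hpz.2
        simp only [Set.mem_setOf_eq, htz'] at this
        exact absurd this (not_le.mpr (hGs₀ vz hpz.1.2))
    have hGpos : ∀ t, ts < t → t ≤ s₀ → ∀ v ∈ Sph, 0 < G (t, v) := by
      intro t h1 h2 v hv
      by_contra hle
      push_neg at hle
      have hmem : t ∈ Z :=
        ⟨(t, v), ⟨Set.mk_mem_prod ⟨le_trans htsIcc.1 (le_of_lt h1), h2⟩ hv, hle⟩, rfl⟩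
      exact absurd (le_csSup hZcompact.bddAbove hmem) (not_le.mpr h1)
    have hClaimA : ∀ v ∈ Sph, 0 ≤ G (ts, v) := by
      intro v hv
      have hcontv : ContinuousAt (fun t => G (t, v)) ts :=
        (hGcont.comp (continuous_id.prodMk continuous_const)).continuousAt
      refine ge_of_tendsto
        (hcontv.tendsto.mono_left (nhdsWithin_le_nhds : 𝓝[Set.Ioi ts] ts ≤ _)) ?_
      filter_upwards [Ioo_mem_nhdsGT hts_lt] with t ht
      exact le_of_lt (hGpos t ht.1 (le_of_lt ht.2) v hv)
    obtain ⟨⟨tz, vs⟩, ⟨hpmem, hGle⟩, htzeq⟩ := htsZ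
    have hvs : vs ⬝ᵥ vs = 1 := hpmem.2
    have htz : tz = ts := htzeq
    simp only [Set.mem_setOf_eq, htz] at hGle
    have hGz : G (ts, vs) = 0 := le_antisymm hGle (hClaimA vs hvs)
    set c : ℝ := η * Real.exp (K * (s₀ - ts)) with hc_def
    have hcpos : 0 < c := mul_pos hη (Real.exp_pos _)
    set Ms : Matrix (Fin d) (Fin d) ℝ := u ts + c • (1 : Matrix (Fin d) (Fin d) ℝ) with hMs_def
    have hMsmul : ∀ w : Fin d → ℝ, Ms *ᵥ w = (u ts) *ᵥ w + c • w := by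
      intro w
      simp [hMs_def, Matrix.add_mulVec, smul_mulVec]
    have hMsq : ∀ w : Fin d → ℝ, w ⬝ᵥ Ms *ᵥ w = w ⬝ᵥ (u ts) *ᵥ w + c * (w ⬝ᵥ w) := by
      intro w
      rw [hMsmul, dotProduct_add, dotProduct_smul, smul_eq_mul]
    have hGts : ∀ w : Fin d → ℝ, G (ts, w) = w ⬝ᵥ (u ts) *ᵥ w + c := by
      intro w
      simp only [hG_def, hcleq ts htsIcc, hc_def]
    have hMsPSD : Ms.PosSemidef := by
      refine Matrix.PosSemidef.of_dotProduct_mulVec_nonneg ?_ ?_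
      · apply isHermitian_of_isSymm
        apply Matrix.IsSymm.add
        · exact husym ts htsIoo
        · show (c • (1 : Matrix (Fin d) (Fin d) ℝ))ᵀ = _
          rw [Matrix.transpose_smul, Matrix.transpose_one]
      · intro w
        rw [star_trivial, hMsq]
        rcases eq_or_ne w 0 with rfl | hw
        · simp
        have hww : 0 < w ⬝ᵥ w := by
          obtain ⟨i, hi⟩ := Function.ne_iff.mp hw
          exact Finset.sum_pos' (fun j _ => mul_self_nonneg _)
            ⟨i, Finset.mem_univ i, mul_self_pos.mpr hi⟩
        set nw : ℝ := Real.sqrt (w ⬝ᵥ w) with hnw_def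
        have hnw : 0 < nw := Real.sqrt_pos.mpr hww
        have hnw2 : nw * nw = w ⬝ᵥ w := Real.mul_self_sqrt hww.le
        set vn : Fin d → ℝ := nw⁻¹ • w with hvn_def
        have hvn : vn ⬝ᵥ vn = 1 := by
          simp only [hvn_def, smul_dotProduct, dotProduct_smul, smul_eq_mul]
          rw [← hnw2]
          field_simp
        have h0 : 0 ≤ G (ts, vn) := hClaimA vn hvn
        rw [hGts vn] at h0
        have hsc : vn ⬝ᵥ (u ts) *ᵥ vn = nw⁻¹ * nw⁻¹ * (w ⬝ᵥ (u ts) *ᵥ w) := by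
          simp only [hvn_def, smul_dotProduct, dotProduct_smul, mulVec_smul, smul_eq_mul]
          ring
        rw [hsc] at h0
        have hc1 : c * (w ⬝ᵥ w) = nw * nw * c := by rw [hnw2]; ring
        have h2 : 0 ≤ (nw * nw) * (nw⁻¹ * nw⁻¹ * (w ⬝ᵥ (u ts) *ᵥ w) + c) :=
          mul_nonneg (mul_pos hnw hnw).le h0
        have h3 : (nw * nw) * (nw⁻¹ * nw⁻¹ * (w ⬝ᵥ (u ts) *ᵥ w) + c)
            = w ⬝ᵥ (u ts) *ᵥ w + nw * nw * c := by
          field_simp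
        rw [h3] at h2
        rw [hc1]
        linarith
    have hnull : Ms *ᵥ vs = 0 := by
      apply (hMsPSD.dotProduct_mulVec_zero_iff vs).mp
      rw [star_trivial, hMsq vs, hvs, mul_one, ← hGts vs, hGz]
    have hEig : (u ts) *ᵥ vs = (-c) • vs := by
      rw [hMsmul] at hnull
      rw [neg_smul]
      exact eq_neg_of_add_eq_zero_left hnull
    set Dmat : Matrix (Fin d) (Fin d) ℝ :=
      -(Rbar ts) - (F ts * F ts - Ftil ts * Ftil ts) - u ts * W - Wᵀ * u ts with hDmat_def
    set g : ℝ → ℝ := fun t => vs ⬝ᵥ (u t) *ᵥ vs + η * Real.exp (K * (s₀ - t)) with hgdef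
    have hg : HasDerivAt g (vs ⬝ᵥ Dmat *ᵥ vs + -(K * c)) ts := by
      apply HasDerivAt.add
      · have h1 : ∀ i j, HasDerivAt (fun t => vs i * u t i j * vs j) (vs i * Dmat i j * vs j) ts :=
          fun i j => ((hu' ts htsIoo i j).const_mul (vs i)).mul_const (vs j)
        have h2 := HasDerivAt.fun_sum (u := Finset.univ)
          fun i _ => HasDerivAt.fun_sum (u := Finset.univ) fun j _ => h1 i j
        have e1 : (fun t => vs ⬝ᵥ (u t) *ᵥ vs) = fun t => ∑ i, ∑ j, vs i * u t i j * vs j :=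
          funext fun t => qform_eq _ _
        rw [e1, qform_eq]
        exact h2
      · have h2 : HasDerivAt (fun t : ℝ => K * (s₀ - t)) (-K) ts := by
          simpa using ((hasDerivAt_id ts).const_sub s₀).const_mul K
        have h3 := (h2.exp).const_mul η
        rw [show -(K * c) = η * (Real.exp (K * (s₀ - ts)) * -K) by rw [hc_def]; ring]
        exact h3
    have hgG : ∀ t (ht : t ∈ Icc t1 s₀), g t = G (t, vs) := by
      intro t ht
      simp only [hgdef, hG_def, hcleq t ht]
    have hg0 : g ts = 0 := by rw [hgG ts htsIcc]; exact hGz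
    have hDge : 0 ≤ vs ⬝ᵥ Dmat *ᵥ vs + -(K * c) := by
      have hW2 := hg.hasDerivWithinAt (s := Set.Ioi ts)
      rw [hasDerivWithinAt_iff_tendsto_slope] at hW2
      have hset : Set.Ioi ts \ {ts} = Set.Ioi ts :=
        Set.diff_singleton_eq_self (fun h => lt_irrefl ts h)
      rw [hset] at hW2
      refine ge_of_tendsto hW2 ?_
      filter_upwards [Ioo_mem_nhdsGT hts_lt] with t ht
      rw [slope_def_field, hg0, sub_zero]
      apply div_nonneg
      · have hGp := hGpos t ht.1 (le_of_lt ht.2) vs hvs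
        rw [← hgG t ⟨le_trans htsIcc.1 (le_of_lt ht.1), le_of_lt ht.2⟩] at hGp
        exact le_of_lt hGp
      · linarith [ht.1]
    have hsymdot : ∀ w : Fin d → ℝ, vs ⬝ᵥ (u ts) *ᵥ w = ((u ts) *ᵥ vs) ⬝ᵥ w := by
      intro w
      rw [dotProduct_mulVec]
      congr 1
      conv_lhs => rw [← husym ts htsIoo]
      rw [vecMul_transpose]
    have hDq : vs ⬝ᵥ Dmat *ᵥ vs
        = -(vs ⬝ᵥ (Rbar ts) *ᵥ vs) + c * (vs ⬝ᵥ (Bm ts) *ᵥ vs) := by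
      have hsplit : Dmat = -(Rbar ts) - (F ts * u ts + u ts * Ftil ts) - u ts * W - Wᵀ * u ts := by
        simp only [hDmat_def, hu_def]; noncomm_ring
      rw [hsplit]
      simp only [Matrix.sub_mulVec, Matrix.neg_mulVec, Matrix.add_mulVec,
        dotProduct_sub, dotProduct_neg, dotProduct_add]
      rw [← mulVec_mulVec (v := vs) (M := F ts) (N := u ts)]
      rw [← mulVec_mulVec (v := vs) (M := u ts) (N := Ftil ts)]
      rw [← mulVec_mulVec (v := vs) (M := u ts) (N := W)]
      rw [← mulVec_mulVec (v := vs) (M := Wᵀ) (N := u ts)]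
      rw [hsymdot (Ftil ts *ᵥ vs), hsymdot (W *ᵥ vs), hEig]
      simp only [mulVec_smul, dotProduct_smul, smul_dotProduct, smul_eq_mul, hBm_def,
        Matrix.add_mulVec, dotProduct_add]
      ring
    have hRb : (0:ℝ) ≤ vs ⬝ᵥ (Rbar ts) *ᵥ vs := by
      have := (hRbarPos ts htsIoo).dotProduct_mulVec_nonneg vs
      rwa [star_trivial] at this
    have hvi : ∀ i, |vs i| ≤ 1 := by
      intro i
      rw [abs_le_one_iff_mul_self_le_one]
      calc vs i * vs i ≤ ∑ j, vs j * vs j :=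
            Finset.single_le_sum (fun j _ => mul_self_nonneg (vs j)) (Finset.mem_univ i)
        _ = 1 := hvs
    have hQb : vs ⬝ᵥ (Bm ts) *ᵥ vs ≤ Mb := by
      rw [qform_eq]
      refine le_trans ?_ (hMb' ts htsIcc)
      apply Finset.sum_le_sum
      intro i _
      apply Finset.sum_le_sum
      intro j _
      calc vs i * Bm ts i j * vs j ≤ |vs i * Bm ts i j * vs j| := le_abs_self _
        _ = |vs i| * |Bm ts i j| * |vs j| := by rw [abs_mul, abs_mul]
        _ ≤ 1 * |Bm ts i j| * 1 := by
            apply mul_le_mul (mul_le_mul (hvi i) le_rfl (abs_nonneg _) zero_le_one)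
              (hvi j) (abs_nonneg _)
            positivity
        _ = |Bm ts i j| := by ring
    rw [hDq, hK_def] at hDge
    have hcq : c * (vs ⬝ᵥ (Bm ts) *ᵥ vs) ≤ c * Mb :=
      mul_le_mul_of_nonneg_left hQb hcpos.le
    nlinarith
  -- conclude PSD at t1
  refine Matrix.PosSemidef.of_dotProduct_mulVec_nonneg ?_ ?_
  · exact isHermitian_of_isSymm (Matrix.IsSymm.sub (hFSym t1 ht1) (hFtilSym t1 ht1))
  · intro x
    show (0:ℝ) ≤ star x ⬝ᵥ (u t1) *ᵥ x
    rw [star_trivial]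
    rcases eq_or_ne x 0 with rfl | hx
    · simp
    have hxx : 0 < x ⬝ᵥ x := by
      obtain ⟨i, hi⟩ := Function.ne_iff.mp hx
      exact Finset.sum_pos' (fun j _ => mul_self_nonneg _)
        ⟨i, Finset.mem_univ i, mul_self_pos.mpr hi⟩
    by_contra hneg
    push_neg at hneg
    set n : ℝ := Real.sqrt (x ⬝ᵥ x) with hn_def
    have hn : 0 < n := Real.sqrt_pos.mpr hxx
    have hn2 : n * n = x ⬝ᵥ x := Real.mul_self_sqrt hxx.le
    set v : Fin d → ℝ := n⁻¹ • x with hv_def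
    have hv : v ⬝ᵥ v = 1 := by
      simp only [hv_def, smul_dotProduct, dotProduct_smul, smul_eq_mul]
      rw [← hn2]; field_simp
    have hscale : v ⬝ᵥ (u t1) *ᵥ v = n⁻¹ * n⁻¹ * (x ⬝ᵥ (u t1) *ᵥ x) := by
      simp only [hv_def, smul_dotProduct, dotProduct_smul, mulVec_smul, smul_eq_mul]
      ring
    set q : ℝ := x ⬝ᵥ (u t1) *ᵥ x with hq_def
    set η : ℝ := -(n⁻¹ * n⁻¹ * q) / Real.exp (K * (s₀ - t1)) with hη_def
    have hqneg : q < 0 := hneg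
    have hη0 : 0 < η := by
      apply div_pos _ (Real.exp_pos _)
      have : 0 < n⁻¹ * n⁻¹ := by positivity
      nlinarith
    have h := key η hη0 t1 ⟨le_rfl, le_of_lt ht1s₀⟩ v hv
    rw [hscale, hη_def, div_mul_cancel₀ _ (ne_of_gt (Real.exp_pos _))] at h
    linarith
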